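/- Assume u_a < 0 and u_b > 0. For every t > 0 and every x with x < a + u_a t, the approximate velocity u^ε(x,t) tends to u_a and the approximate potential density R^ε(x,t) tends to ρ_c·(x − c − u_a t) as ε → 0⁺. -/

import Mathlib

open Real Filter Topology

/-- The unnormalized complementary error function `erfc z = ∫_z^∞ e^{-s²} ds`. -/
noncomputable def erfc (z : ℝ) : ℝ := ∫ s in Set.Ioi z, Real.exp (-s ^ 2)

open MeasureTheory Set

lemma integrable_gauss : Integrable (fun s : ℝ => Real.exp (-s ^ 2)) := by
  simpa using integrable_exp_neg_mul_sq (by norm_num : (0:ℝ) < 1)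

lemma integral_gauss : ∫ s : ℝ, Real.exp (-s ^ 2) = Real.sqrt π := by
  simpa using integral_gaussian 1

lemma erfc_nonneg (z : ℝ) : 0 ≤ erfc z :=
  setIntegral_nonneg measurableSet_Ioi fun _ _ => (Real.exp_pos _).le

lemma erfc_le_sqrt_pi (z : ℝ) : erfc z ≤ Real.sqrt π := by
  refine le_trans (setIntegral_le_integral integrable_gauss ?_) integral_gauss.le
  exact Filter.Eventually.of_forall fun s => (Real.exp_pos _).le

lemma erfc_anti : Antitone erfc := by
  intro p q hpq
  exact setIntegral_mono_set integrable_gauss.integrableOn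
    (Filter.Eventually.of_forall fun s => (Real.exp_pos _).le)
    (HasSubset.Subset.eventuallyLE (Set.Ioi_subset_Ioi hpq))

lemma erfc_add_neg (z : ℝ) : erfc z + erfc (-z) = Real.sqrt π := by
  have h1 : erfc (-z) = ∫ s in Set.Iic z, Real.exp (-s ^ 2) := by
    rw [erfc]
    have := integral_comp_neg_Ioi (-z) (f := fun s : ℝ => Real.exp (-s ^ 2))
    simp only [neg_neg] at this
    rw [← this]
    congr 1; ext s; rw [neg_pow]; ring_nf
  rw [h1, add_comm, erfc,
    intervalIntegral.integral_Iic_add_Ioi integrable_gauss.integrableOn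
      integrable_gauss.integrableOn,
    integral_gauss]

lemma erfc_le_exp {z : ℝ} (hz : 0 ≤ z) : erfc z ≤ Real.sqrt π * Real.exp (-z ^ 2) := by
  have key : erfc z ≤ ∫ s in Set.Ioi z, Real.exp (-z ^ 2) * Real.exp (-(s - z) ^ 2) := by
    refine setIntegral_mono_on integrable_gauss.integrableOn ?_ measurableSet_Ioi ?_
    · exact (integrable_gauss.comp_sub_right z).const_mul _ |>.integrableOn
    · intro s hs
      rw [← Real.exp_add]
      apply Real.exp_le_exp.2
      nlinarith [le_of_lt (Set.mem_Ioi.1 hs)]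
  rw [MeasureTheory.integral_const_mul] at key
  refine key.trans ?_
  rw [mul_comm]
  apply mul_le_mul_of_nonneg_right _ (Real.exp_pos _).le
  calc (∫ s in Set.Ioi z, Real.exp (-(s - z) ^ 2))
      ≤ ∫ s : ℝ, Real.exp (-(s - z) ^ 2) := by
        refine setIntegral_le_integral (integrable_gauss.comp_sub_right z) ?_
        exact Filter.Eventually.of_forall fun s => (Real.exp_pos _).le
    _ = Real.sqrt π := by
        rw [MeasureTheory.integral_sub_right_eq_self (fun s : ℝ => Real.exp (-s ^ 2)) z]
        exact integral_gauss

lemma erfc_tendsto_atBot : Tendsto erfc atBot (𝓝 (Real.sqrt π)) := by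
  have hsq : Tendsto (fun z : ℝ => Real.exp (-z ^ 2)) atBot (𝓝 0) := by
    apply Real.tendsto_exp_atBot.comp
    have h1 : Tendsto (fun z : ℝ => z * z) atBot atTop :=
      Filter.Tendsto.atBot_mul_atBot₀ tendsto_id tendsto_id
    have h2 : Tendsto (fun z : ℝ => -(z * z)) atBot atBot := tendsto_neg_atTop_atBot.comp h1
    refine h2.congr fun z => by ring
  refine tendsto_of_tendsto_of_tendsto_of_le_of_le'
    (g := fun z : ℝ => Real.sqrt π - Real.sqrt π * Real.exp (-z ^ 2))
    (h := fun _ : ℝ => Real.sqrt π) ?_ tendsto_const_nhds ?_ ?_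
  · have := (hsq.const_mul (Real.sqrt π)).const_sub (Real.sqrt π)
    simpa using this
  · filter_upwards [Filter.eventually_le_atBot (0:ℝ)] with z hz
    have h1 : erfc z = Real.sqrt π - erfc (-z) := by
      have := erfc_add_neg z; linarith
    have h2 : erfc (-z) ≤ Real.sqrt π * Real.exp (-(-z) ^ 2) := erfc_le_exp (by linarith)
    rw [h1]
    have h3 : (-z : ℝ) ^ 2 = z ^ 2 := by ring
    rw [h3] at h2
    linarith
  · exact Filter.Eventually.of_forall fun z => erfc_le_sqrt_pi z

/-- combining exponentials with common denominator -/
lemma exp_div_comb (p q r : ℝ) :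
    Real.exp (p / r) * (Real.exp (q / r))⁻¹ = Real.exp ((p - q) / r) := by
  rw [← Real.exp_neg, ← Real.exp_add]
  congr 1
  rw [sub_div]
  ring

lemma exp_vanish {t : ℝ} (ht : 0 < t) {c : ℝ} (hc : c < 0) :
    Tendsto (fun ε : ℝ => Real.exp (c / (2 * t * ε))) (𝓝[>] 0) (𝓝 0) := by
  apply Real.tendsto_exp_atBot.comp
  have h1 : Tendsto (fun ε : ℝ => (c / (2 * t)) * ε⁻¹) (𝓝[>] (0:ℝ)) atBot :=
    Tendsto.const_mul_atTop_of_neg (div_neg_of_neg_of_pos hc (by positivity))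
      tendsto_inv_nhdsGT_zero
  refine h1.congr fun ε => ?_
  rw [div_mul_eq_div_div_swap]
  rw [div_div]
  ring_nf

lemma term_erfc_lim {t : ℝ} (ht : 0 < t) {c : ℝ} (hc : c < 0) :
    Tendsto (fun ε : ℝ => erfc (c / Real.sqrt (2 * t * ε))) (𝓝[>] 0) (𝓝 (Real.sqrt π)) := by
  apply erfc_tendsto_atBot.comp
  have hs : Tendsto (fun ε : ℝ => Real.sqrt (2 * t * ε)) (𝓝[>] 0) (𝓝[>] 0) := by
    apply tendsto_nhdsWithin_of_tendsto_nhds_of_eventually_within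
    · have hcont : Continuous fun ε : ℝ => Real.sqrt (2 * t * ε) := by continuity
      have := (hcont.tendsto 0).mono_left (nhdsWithin_le_nhds (s := Set.Ioi (0:ℝ)))
      simpa using this
    · filter_upwards [self_mem_nhdsWithin] with ε (hε : 0 < ε)
      exact Real.sqrt_pos.2 (by positivity)
  have hinv : Tendsto (fun ε : ℝ => (Real.sqrt (2 * t * ε))⁻¹) (𝓝[>] 0) atTop :=
    tendsto_inv_nhdsGT_zero.comp hs
  have h2 := Tendsto.const_mul_atTop_of_neg hc hinv
  exact h2.congr fun ε => (div_eq_mul_inv _ _).symm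

lemma eps_div_sqrt_tendsto {t : ℝ} (ht : 0 < t) :
    Tendsto (fun ε : ℝ => ε / Real.sqrt (2 * t * ε)) (𝓝[>] 0) (𝓝 0) := by
  have heq : ∀ᶠ ε in 𝓝[>] (0:ℝ),
      Real.sqrt ε / Real.sqrt (2 * t) = ε / Real.sqrt (2 * t * ε) := by
    filter_upwards [self_mem_nhdsWithin] with ε (hε : 0 < ε)
    rw [Real.sqrt_mul (by positivity : (0:ℝ) ≤ 2 * t) ε]
    rw [div_eq_div_iff (by positivity) (by positivity)]
    have h := Real.mul_self_sqrt hε.le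
    linear_combination Real.sqrt (2 * t) * h
  refine Tendsto.congr' heq ?_
  have h1 : Tendsto (fun ε : ℝ => Real.sqrt ε / Real.sqrt (2 * t)) (𝓝 0) (𝓝 0) := by
    have := (Real.continuous_sqrt.tendsto 0).div_const (Real.sqrt (2 * t))
    simpa using this
  exact h1.mono_left nhdsWithin_le_nhds

/-- diff-of-erfc term divided by the dominant exponential vanishes. -/
lemma term_diff {t : ℝ} (ht : 0 < t) {p q Δv : ℝ} (hq : q < 0) (hpq : p ≤ q)
    (hpos : 0 < Δv + q ^ 2) :
    Tendsto (fun ε : ℝ => (erfc (p / Real.sqrt (2 * t * ε)) - erfc (q / Real.sqrt (2 * t * ε)))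
        * (Real.exp (Δv / (2 * t * ε)))⁻¹) (𝓝[>] 0) (𝓝 0) := by
  apply squeeze_zero_norm' (a := fun ε : ℝ => Real.sqrt π * Real.exp ((-q ^ 2 - Δv) / (2 * t * ε)))
  · filter_upwards [self_mem_nhdsWithin] with ε (hε : 0 < ε)
    have h2t : (0:ℝ) < 2 * t * ε := by positivity
    have hs : 0 < Real.sqrt (2 * t * ε) := Real.sqrt_pos.2 h2t
    have hmono : erfc (q / Real.sqrt (2 * t * ε)) ≤ erfc (p / Real.sqrt (2 * t * ε)) :=
      erfc_anti (by gcongr)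
    have hq0 : (0:ℝ) ≤ -(q / Real.sqrt (2 * t * ε)) := by
      have : q / Real.sqrt (2 * t * ε) < 0 := div_neg_of_neg_of_pos hq hs
      linarith
    have hexp := erfc_le_exp hq0
    have hsq : -(-(q / Real.sqrt (2 * t * ε))) ^ 2 = -q ^ 2 / (2 * t * ε) := by
      rw [neg_sq, div_pow, Real.sq_sqrt h2t.le]
      ring
    rw [hsq] at hexp
    have hdiff_le : erfc (p / Real.sqrt (2 * t * ε)) - erfc (q / Real.sqrt (2 * t * ε))
        ≤ Real.sqrt π * Real.exp (-q ^ 2 / (2 * t * ε)) := by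
      have h1 := erfc_add_neg (q / Real.sqrt (2 * t * ε))
      have h2 := erfc_le_sqrt_pi (p / Real.sqrt (2 * t * ε))
      linarith
    have hΦ : (0:ℝ) < (Real.exp (Δv / (2 * t * ε)))⁻¹ := by positivity
    rw [Real.norm_eq_abs, abs_of_nonneg (mul_nonneg (by linarith) hΦ.le)]
    calc (erfc (p / Real.sqrt (2 * t * ε)) - erfc (q / Real.sqrt (2 * t * ε)))
          * (Real.exp (Δv / (2 * t * ε)))⁻¹
        ≤ Real.sqrt π * Real.exp (-q ^ 2 / (2 * t * ε)) * (Real.exp (Δv / (2 * t * ε)))⁻¹ :=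
          mul_le_mul_of_nonneg_right hdiff_le hΦ.le
      _ = Real.sqrt π * Real.exp ((-q ^ 2 - Δv) / (2 * t * ε)) := by
          rw [mul_assoc, exp_div_comb]
  · have := (exp_vanish ht (show -q ^ 2 - Δv < 0 by linarith)).const_mul (Real.sqrt π)
    simpa using this

/-- positive-argument erfc term times bounded weight divided by dominant exponential vanishes. -/
lemma term_pos_erfc {t : ℝ} (ht : 0 < t) {r Δv : ℝ} (hr : 0 < r) (hpos : 0 < Δv + r ^ 2)
    {w : ℝ → ℝ} (hw : ∀ᶠ ε in 𝓝[>] (0:ℝ), 0 ≤ w ε ∧ w ε ≤ 1) :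
    Tendsto (fun ε : ℝ => erfc (r / Real.sqrt (2 * t * ε)) * w ε
        * (Real.exp (Δv / (2 * t * ε)))⁻¹) (𝓝[>] 0) (𝓝 0) := by
  apply squeeze_zero_norm' (a := fun ε : ℝ => Real.sqrt π * Real.exp ((-r ^ 2 - Δv) / (2 * t * ε)))
  · filter_upwards [self_mem_nhdsWithin, hw] with ε (hε : 0 < ε) hwε
    obtain ⟨hw0, hw1⟩ := hwε
    have h2t : (0:ℝ) < 2 * t * ε := by positivity
    have hs : 0 < Real.sqrt (2 * t * ε) := Real.sqrt_pos.2 h2t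
    have hr0 : (0:ℝ) ≤ r / Real.sqrt (2 * t * ε) := by positivity
    have hexp := erfc_le_exp hr0
    have hsq : -(r / Real.sqrt (2 * t * ε)) ^ 2 = -r ^ 2 / (2 * t * ε) := by
      rw [div_pow, Real.sq_sqrt h2t.le]
      ring
    rw [hsq] at hexp
    have hΦ : (0:ℝ) < (Real.exp (Δv / (2 * t * ε)))⁻¹ := by positivity
    have hnn : 0 ≤ erfc (r / Real.sqrt (2 * t * ε)) * w ε := mul_nonneg (erfc_nonneg _) hw0
    rw [Real.norm_eq_abs, abs_of_nonneg (mul_nonneg hnn hΦ.le)]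
    calc erfc (r / Real.sqrt (2 * t * ε)) * w ε * (Real.exp (Δv / (2 * t * ε)))⁻¹
        ≤ Real.sqrt π * Real.exp (-r ^ 2 / (2 * t * ε)) * 1 * (Real.exp (Δv / (2 * t * ε)))⁻¹ := by
          apply mul_le_mul_of_nonneg_right _ hΦ.le
          calc erfc (r / Real.sqrt (2 * t * ε)) * w ε
              ≤ (Real.sqrt π * Real.exp (-r ^ 2 / (2 * t * ε))) * w ε :=
                mul_le_mul_of_nonneg_right hexp hw0
            _ ≤ (Real.sqrt π * Real.exp (-r ^ 2 / (2 * t * ε))) * 1 :=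
                mul_le_mul_of_nonneg_left hw1 (by positivity)
      _ = Real.sqrt π * Real.exp ((-r ^ 2 - Δv) / (2 * t * ε)) := by
          rw [mul_one, mul_assoc, exp_div_comb]
  · have := (exp_vanish ht (show -r ^ 2 - Δv < 0 by linarith)).const_mul (Real.sqrt π)
    simpa using this

/-- `ε/√(2tε)` times a bounded weight vanishes. -/
lemma term_eps {t : ℝ} (ht : 0 < t) {w : ℝ → ℝ} (hw : ∀ᶠ ε in 𝓝[>] (0:ℝ), |w ε| ≤ 1) :
    Tendsto (fun ε : ℝ => ε / Real.sqrt (2 * t * ε) * w ε) (𝓝[>] 0) (𝓝 0) := by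
  apply squeeze_zero_norm' (a := fun ε : ℝ => ε / Real.sqrt (2 * t * ε))
  · filter_upwards [self_mem_nhdsWithin, hw] with ε (hε : 0 < ε) hwε
    have h2t : (0:ℝ) < 2 * t * ε := by positivity
    have hs : 0 < Real.sqrt (2 * t * ε) := Real.sqrt_pos.2 h2t
    have h0 : (0:ℝ) ≤ ε / Real.sqrt (2 * t * ε) := by positivity
    rw [Real.norm_eq_abs, abs_mul, abs_of_nonneg h0]
    calc ε / Real.sqrt (2 * t * ε) * |w ε| ≤ ε / Real.sqrt (2 * t * ε) * 1 :=
          mul_le_mul_of_nonneg_left hwε h0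
      _ = ε / Real.sqrt (2 * t * ε) := mul_one _
  · exact eps_div_sqrt_tendsto ht

open Real Filter Topology

/-- The denominator `D(x,t,ε)` appearing in the Hopf–Cole formulas. -/
noncomputable def D (a b u_a u_b x t ε : ℝ) : ℝ :=
  erfc ((x - a - u_a * t) / Real.sqrt (2 * t * ε))
      * Real.exp (((x - a - u_a * t) ^ 2 - (x - a) ^ 2) / (2 * t * ε))
    + erfc ((x - b) / Real.sqrt (2 * t * ε))
    - erfc ((x - a) / Real.sqrt (2 * t * ε))
    + erfc (-(x - b) / Real.sqrt (2 * t * ε)) * Real.exp (-u_b / ε)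

/-- The approximate velocity `u^ε(x,t)`. -/
noncomputable def uEps (a b u_a u_b x t ε : ℝ) : ℝ :=
  (u_a * erfc ((x - a - u_a * t) / Real.sqrt (2 * t * ε))
        * Real.exp (((x - a - u_a * t) ^ 2 - (x - a) ^ 2) / (2 * t * ε))
      + ε / Real.sqrt (2 * t * ε) * Real.exp (-(x - b) ^ 2 / (2 * t * ε))
          * (1 - Real.exp (-u_b / ε)))
    / D a b u_a u_b x t ε

/-- The approximate potential density `R^ε(x,t)`. -/
noncomputable def REps (a b c d u_a u_b ρ_c ρ_d x t ε : ℝ) : ℝ :=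
  (t * ε / Real.sqrt (2 * t * ε) * ρ_c * Real.exp (-(x - a) ^ 2 / (2 * t * ε))
      + ρ_c * (x - c - u_a * t)
          * Real.exp (((x - a - u_a * t) ^ 2 - (x - a) ^ 2) / (2 * t * ε))
          * erfc ((x - a - u_a * t) / Real.sqrt (2 * t * ε))
      + t * ε / Real.sqrt (2 * t * ε) * ρ_c
          * (Real.exp (-(x - a) ^ 2 / (2 * t * ε)) - Real.exp (-(x - c) ^ 2 / (2 * t * ε)))
      + ρ_c * (x - c)
          * (erfc ((x - c) / Real.sqrt (2 * t * ε)) - erfc ((x - a) / Real.sqrt (2 * t * ε)))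
      + ρ_d * Real.exp (-u_b / ε) * erfc (-(x - d) / Real.sqrt (2 * t * ε)))
    / D a b u_a u_b x t ε

set_option maxHeartbeats 1000000 in
/-- Case `u_a < 0`, `u_b > 0`, region `x < a + u_a·t`: as `ε → 0⁺`, the approximate velocity
tends to `u_a` and the approximate potential density tends to `ρ_c·(x − c − u_a·t)`. -/
theorem vanishing_viscosity_limit_left_of_rarefaction
    (a b c d u_a u_b ρ_c ρ_d : ℝ) (hac : a < c) (hcb : c < b) (hbd : b < d)
    (hua : u_a < 0) (hub : 0 < u_b) (t x : ℝ) (ht : 0 < t) (hx : x < a + u_a * t) :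
    Tendsto (fun ε : ℝ => uEps a b u_a u_b x t ε) (𝓝[>] 0) (𝓝 u_a)
    ∧ Tendsto (fun ε : ℝ => REps a b c d u_a u_b ρ_c ρ_d x t ε) (𝓝[>] 0)
        (𝓝 (ρ_c * (x - c - u_a * t))) := by
  have hπ : (0:ℝ) < Real.sqrt π := Real.sqrt_pos.2 Real.pi_pos
  have huat : u_a * t < 0 := mul_neg_of_neg_of_pos hua ht
  have hA1 : x - a - u_a * t < 0 := by linarith
  have hA : x - a < 0 := by linarith
  have hB : x - b < 0 := by linarith
  have hC : x - c < 0 := by linarith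
  have hD2 : x - d < 0 := by linarith
  have hA1sq : 0 < (x - a - u_a * t) ^ 2 :=
    by nlinarith [mul_pos (neg_pos.2 hA1) (neg_pos.2 hA1)]
  have hposA : 0 < ((x - a - u_a * t) ^ 2 - (x - a) ^ 2) + (x - a) ^ 2 := by nlinarith
  have hposB : 0 < ((x - a - u_a * t) ^ 2 - (x - a) ^ 2) + (-(x - b)) ^ 2 := by
    nlinarith [mul_pos (show (0:ℝ) < b - a by linarith)
      (show (0:ℝ) < a + b - 2 * x by linarith)]
  have hposC : 0 < ((x - a - u_a * t) ^ 2 - (x - a) ^ 2) + (-(x - c)) ^ 2 := by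
    nlinarith [mul_pos (show (0:ℝ) < c - a by linarith)
      (show (0:ℝ) < a + c - 2 * x by linarith)]
  have hposD : 0 < ((x - a - u_a * t) ^ 2 - (x - a) ^ 2) + (-(x - d)) ^ 2 := by
    nlinarith [mul_pos (show (0:ℝ) < d - a by linarith)
      (show (0:ℝ) < a + d - 2 * x by linarith)]
  have hwub : ∀ᶠ ε in 𝓝[>] (0:ℝ), 0 ≤ Real.exp (-u_b / ε) ∧ Real.exp (-u_b / ε) ≤ 1 := by
    filter_upwards [self_mem_nhdsWithin] with ε (hε : 0 < ε)
    refine ⟨(Real.exp_pos _).le, Real.exp_le_one_iff.2 ?_⟩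
    exact (div_neg_of_neg_of_pos (by linarith) hε).le
  -- the denominator divided by the dominant exponential tends to √π
  have hDlim : Tendsto (fun ε : ℝ => D a b u_a u_b x t ε *
      (Real.exp (((x - a - u_a * t) ^ 2 - (x - a) ^ 2) / (2 * t * ε)))⁻¹) (𝓝[>] 0)
      (𝓝 (Real.sqrt π)) := by
    have h1 := term_erfc_lim ht hA1
    have h2 := term_diff ht hA (show x - b ≤ x - a by linarith) hposA
    have h3 := term_pos_erfc ht (show (0:ℝ) < -(x - b) by linarith) hposB
      (w := fun ε : ℝ => Real.exp (-u_b / ε)) hwub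
    have hsum := h1.add (h2.add h3)
    rw [show Real.sqrt π + (0 + 0) = Real.sqrt π from by ring] at hsum
    refine Tendsto.congr (fun ε => ?_) hsum
    have hcancel := mul_inv_cancel₀
      (Real.exp_ne_zero (((x - a - u_a * t) ^ 2 - (x - a) ^ 2) / (2 * t * ε)))
    simp only [D]
    linear_combination (-(erfc ((x - a - u_a * t) / Real.sqrt (2 * t * ε)))) * hcancel
  -- numerator of uEps divided by the dominant exponential
  have hNlim : Tendsto (fun ε : ℝ =>
      (u_a * erfc ((x - a - u_a * t) / Real.sqrt (2 * t * ε))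
          * Real.exp (((x - a - u_a * t) ^ 2 - (x - a) ^ 2) / (2 * t * ε))
        + ε / Real.sqrt (2 * t * ε) * Real.exp (-(x - b) ^ 2 / (2 * t * ε))
            * (1 - Real.exp (-u_b / ε)))
      * (Real.exp (((x - a - u_a * t) ^ 2 - (x - a) ^ 2) / (2 * t * ε)))⁻¹) (𝓝[>] 0)
      (𝓝 (u_a * Real.sqrt π)) := by
    have h1 := (term_erfc_lim ht hA1).const_mul u_a
    have hw : ∀ᶠ ε in 𝓝[>] (0:ℝ),
        |Real.exp (-(x - b) ^ 2 / (2 * t * ε)) * (1 - Real.exp (-u_b / ε))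
          * (Real.exp (((x - a - u_a * t) ^ 2 - (x - a) ^ 2) / (2 * t * ε)))⁻¹| ≤ 1 := by
      filter_upwards [self_mem_nhdsWithin, hwub] with ε (hε : 0 < ε) hub2
      rw [mul_right_comm, exp_div_comb, abs_mul, abs_of_pos (Real.exp_pos _),
        abs_of_nonneg (by linarith [hub2.2])]
      refine mul_le_one₀ (Real.exp_le_one_iff.2 ?_) (by linarith [hub2.2]) (by linarith [hub2.1])
      exact (div_neg_of_neg_of_pos (by nlinarith) (by positivity)).le
    have h2 := term_eps ht hw
    have hsum := h1.add h2
    rw [show u_a * Real.sqrt π + 0 = u_a * Real.sqrt π from by ring] at hsum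
    refine Tendsto.congr (fun ε => ?_) hsum
    have hcancel := mul_inv_cancel₀
      (Real.exp_ne_zero (((x - a - u_a * t) ^ 2 - (x - a) ^ 2) / (2 * t * ε)))
    linear_combination (-(u_a * erfc ((x - a - u_a * t) / Real.sqrt (2 * t * ε)))) * hcancel
  -- numerator of REps divided by the dominant exponential
  have hRNlim : Tendsto (fun ε : ℝ =>
      (t * ε / Real.sqrt (2 * t * ε) * ρ_c * Real.exp (-(x - a) ^ 2 / (2 * t * ε))
        + ρ_c * (x - c - u_a * t)
            * Real.exp (((x - a - u_a * t) ^ 2 - (x - a) ^ 2) / (2 * t * ε))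
            * erfc ((x - a - u_a * t) / Real.sqrt (2 * t * ε))
        + t * ε / Real.sqrt (2 * t * ε) * ρ_c
            * (Real.exp (-(x - a) ^ 2 / (2 * t * ε)) - Real.exp (-(x - c) ^ 2 / (2 * t * ε)))
        + ρ_c * (x - c)
            * (erfc ((x - c) / Real.sqrt (2 * t * ε)) - erfc ((x - a) / Real.sqrt (2 * t * ε)))
        + ρ_d * Real.exp (-u_b / ε) * erfc (-(x - d) / Real.sqrt (2 * t * ε)))
      * (Real.exp (((x - a - u_a * t) ^ 2 - (x - a) ^ 2) / (2 * t * ε)))⁻¹) (𝓝[>] 0)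
      (𝓝 (ρ_c * (x - c - u_a * t) * Real.sqrt π)) := by
    have hw1 : ∀ᶠ ε in 𝓝[>] (0:ℝ),
        |Real.exp (-(x - a) ^ 2 / (2 * t * ε))
          * (Real.exp (((x - a - u_a * t) ^ 2 - (x - a) ^ 2) / (2 * t * ε)))⁻¹| ≤ 1 := by
      filter_upwards [self_mem_nhdsWithin] with ε (hε : 0 < ε)
      rw [exp_div_comb, abs_of_pos (Real.exp_pos _)]
      exact Real.exp_le_one_iff.2 (div_neg_of_neg_of_pos (by nlinarith) (by positivity)).le
    have hw3 : ∀ᶠ ε in 𝓝[>] (0:ℝ),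
        |(Real.exp (-(x - a) ^ 2 / (2 * t * ε)) - Real.exp (-(x - c) ^ 2 / (2 * t * ε)))
          * (Real.exp (((x - a - u_a * t) ^ 2 - (x - a) ^ 2) / (2 * t * ε)))⁻¹| ≤ 1 := by
      filter_upwards [self_mem_nhdsWithin] with ε (hε : 0 < ε)
      rw [sub_mul, exp_div_comb, exp_div_comb]
      have e1 : Real.exp ((-(x - a) ^ 2 - ((x - a - u_a * t) ^ 2 - (x - a) ^ 2))
          / (2 * t * ε)) ≤ 1 :=
        Real.exp_le_one_iff.2 (div_neg_of_neg_of_pos (by nlinarith) (by positivity)).le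
      have e2 : Real.exp ((-(x - c) ^ 2 - ((x - a - u_a * t) ^ 2 - (x - a) ^ 2))
          / (2 * t * ε)) ≤ 1 :=
        Real.exp_le_one_iff.2 (div_neg_of_neg_of_pos (by nlinarith) (by positivity)).le
      rw [abs_sub_le_iff]
      constructor <;> linarith [Real.exp_pos ((-(x - a) ^ 2
          - ((x - a - u_a * t) ^ 2 - (x - a) ^ 2)) / (2 * t * ε)),
        Real.exp_pos ((-(x - c) ^ 2 - ((x - a - u_a * t) ^ 2 - (x - a) ^ 2)) / (2 * t * ε))]
    have g1 := (term_eps ht hw1).const_mul (ρ_c * t)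
    have g2 := (term_erfc_lim ht hA1).const_mul (ρ_c * (x - c - u_a * t))
    have g3 := (term_eps ht hw3).const_mul (ρ_c * t)
    have g4 := (term_diff ht hA (show x - c ≤ x - a by linarith) hposA).const_mul (ρ_c * (x - c))
    have g5 := (term_pos_erfc ht (show (0:ℝ) < -(x - d) by linarith) hposD
      (w := fun ε : ℝ => Real.exp (-u_b / ε)) hwub).const_mul ρ_d
    have hsum := g1.add (g2.add (g3.add (g4.add g5)))
    rw [show (ρ_c * t) * 0 + (ρ_c * (x - c - u_a * t) * Real.sqrt π
        + ((ρ_c * t) * 0 + (ρ_c * (x - c) * 0 + ρ_d * 0)))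
        = ρ_c * (x - c - u_a * t) * Real.sqrt π from by ring] at hsum
    refine Tendsto.congr (fun ε => ?_) hsum
    have hcancel := mul_inv_cancel₀
      (Real.exp_ne_zero (((x - a - u_a * t) ^ 2 - (x - a) ^ 2) / (2 * t * ε)))
    linear_combination
      (-(ρ_c * (x - c - u_a * t) * erfc ((x - a - u_a * t) / Real.sqrt (2 * t * ε)))) * hcancel
  constructor
  · have hdiv := hNlim.div hDlim (ne_of_gt hπ)
    have heq : ∀ ε : ℝ, (u_a * erfc ((x - a - u_a * t) / Real.sqrt (2 * t * ε))
          * Real.exp (((x - a - u_a * t) ^ 2 - (x - a) ^ 2) / (2 * t * ε))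
        + ε / Real.sqrt (2 * t * ε) * Real.exp (-(x - b) ^ 2 / (2 * t * ε))
            * (1 - Real.exp (-u_b / ε)))
        * (Real.exp (((x - a - u_a * t) ^ 2 - (x - a) ^ 2) / (2 * t * ε)))⁻¹
        / (D a b u_a u_b x t ε
          * (Real.exp (((x - a - u_a * t) ^ 2 - (x - a) ^ 2) / (2 * t * ε)))⁻¹)
        = uEps a b u_a u_b x t ε := by
      intro ε
      rw [mul_div_mul_right _ _ (inv_ne_zero (Real.exp_ne_zero _))]
      rfl
    have := hdiv.congr heq
    rwa [mul_div_cancel_right₀ _ (ne_of_gt hπ)] at this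
  · have hdiv := hRNlim.div hDlim (ne_of_gt hπ)
    have heq : ∀ ε : ℝ,
        (t * ε / Real.sqrt (2 * t * ε) * ρ_c * Real.exp (-(x - a) ^ 2 / (2 * t * ε))
          + ρ_c * (x - c - u_a * t)
              * Real.exp (((x - a - u_a * t) ^ 2 - (x - a) ^ 2) / (2 * t * ε))
              * erfc ((x - a - u_a * t) / Real.sqrt (2 * t * ε))
          + t * ε / Real.sqrt (2 * t * ε) * ρ_c
              * (Real.exp (-(x - a) ^ 2 / (2 * t * ε)) - Real.exp (-(x - c) ^ 2 / (2 * t * ε)))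
          + ρ_c * (x - c)
              * (erfc ((x - c) / Real.sqrt (2 * t * ε)) - erfc ((x - a) / Real.sqrt (2 * t * ε)))
          + ρ_d * Real.exp (-u_b / ε) * erfc (-(x - d) / Real.sqrt (2 * t * ε)))
        * (Real.exp (((x - a - u_a * t) ^ 2 - (x - a) ^ 2) / (2 * t * ε)))⁻¹
        / (D a b u_a u_b x t ε
          * (Real.exp (((x - a - u_a * t) ^ 2 - (x - a) ^ 2) / (2 * t * ε)))⁻¹)
        = REps a b c d u_a u_b ρ_c ρ_d x t ε := by
      intro ε
      rw [mul_div_mul_right _ _ (inv_ne_zero (Real.exp_ne_zero _))]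
      rfl
    have := hdiv.congr heq
    rwa [mul_div_cancel_right₀ _ (ne_of_gt hπ)] at this
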